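/- A pebble configuration with f free pebbles (out of n total pebbles) is realizable in the reversible pebble game if and only if its placed pebbles can be numbered f, f+1, ..., n-1 so that for each i, pebble i has a higher-numbered pebble (or the fixed pebble at node 0) at most 2^i positions to its left. -/

import Mathlib

/-- One legal move of the reversible pebble game with `n` movable pebbles
(plus the fixed pebble on node 0): place a free pebble on node `i+1` or
remove the pebble from node `i+1`, provided node `i` carries a pebble. -/
def PebbleStep (n : ℕ) (c c' : Finset ℕ) : Prop :=
  ∃ i, i ∈ c ∧
    ((i + 1 ∉ c ∧ c.card < n + 1 ∧ c' = insert (i + 1) c) ∨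
     (i + 1 ∈ c ∧ c' = c.erase (i + 1)))

/-- A configuration is realizable if it arises from the all-free initial
configuration `{0}` by legal moves. -/
def PebbleReachable (n : ℕ) (c : Finset ℕ) : Prop :=
  Relation.ReflTransGen (PebbleStep n) {0} c

/-- A good numbering of the placed pebbles of a configuration with `f` free
pebbles (out of `n`): a list `L` of the placed nodes, where the entry at
index `i` represents the pebble numbered `f + i`, such that each pebble `f+i`
has a higher-numbered pebble (a later list entry, or the fixed pebble at node
0) at most `2^(f+i)` positions to its left. -/
def GoodNumbering (f : ℕ) (placed : Finset ℕ) : Prop :=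
  ∃ L : List ℕ, L.Nodup ∧ L.toFinset = placed ∧
    ∀ i : Fin L.length, ∃ q, (q = 0 ∨ q ∈ L.drop (i.1 + 1)) ∧
      q < L.get i ∧ L.get i - q ≤ 2 ^ (f + i.1)

namespace PebbleAux

abbrev Reach (n : ℕ) (c c' : Finset ℕ) : Prop :=
  Relation.ReflTransGen (PebbleStep n) c c'

lemma step_card_le {n : ℕ} {c c' : Finset ℕ} (h : PebbleStep n c c')
    (hc : c.card ≤ n + 1) : c'.card ≤ n + 1 := by
  obtain ⟨i, hi, h | h⟩ := h
  · obtain ⟨h1, h2, rfl⟩ := h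
    rw [Finset.card_insert_of_notMem h1]; omega
  · obtain ⟨h1, rfl⟩ := h
    exact le_trans (Finset.card_erase_le) hc

lemma reach_card_le {n : ℕ} {c c' : Finset ℕ} (h : Reach n c c')
    (hc : c.card ≤ n + 1) : c'.card ≤ n + 1 := by
  induction h with
  | refl => exact hc
  | tail _ hstep ih => exact step_card_le hstep ih

lemma step_symm {n : ℕ} {c c' : Finset ℕ} (h : PebbleStep n c c')
    (hc : c.card ≤ n + 1) : PebbleStep n c' c := by
  obtain ⟨i, hi, h | h⟩ := h
  · obtain ⟨h1, h2, rfl⟩ := h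
    exact ⟨i, Finset.mem_insert_of_mem hi,
      Or.inr ⟨Finset.mem_insert_self _ _, (Finset.erase_insert h1).symm⟩⟩
  · obtain ⟨h1, rfl⟩ := h
    refine ⟨i, Finset.mem_erase.2 ⟨by omega, hi⟩, Or.inl ⟨?_, ?_, ?_⟩⟩
    · simp
    · exact lt_of_lt_of_le (Finset.card_erase_lt_of_mem h1) hc
    · exact (Finset.insert_erase h1).symm

lemma reach_symm {n : ℕ} {c c' : Finset ℕ} (h : Reach n c c')
    (hc : c.card ≤ n + 1) : Reach n c' c := by
  induction h with
  | refl => exact Relation.ReflTransGen.refl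
  | tail hsteps hstep ih =>
      exact Relation.ReflTransGen.head
        (step_symm hstep (reach_card_le hsteps hc)) ih

/-- The key constructive lemma: a new pebble can be placed at distance
`d ≤ 2^j` to the right of a pebble, provided at least `j+1` pebbles are free. -/
lemma reach_insert (n : ℕ) : ∀ d j q (c : Finset ℕ), 1 ≤ d → d ≤ 2 ^ j →
    q ∈ c → q + d ∉ c → c.card + j + 1 ≤ n + 1 →
    Reach n c (insert (q + d) c) := by
  intro d
  induction d using Nat.strong_induction_on with
  | _ d ih =>
    intro j q c hd1 hdj hq hqd hcard
    by_cases hd : d = 1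
    · subst hd
      exact Relation.ReflTransGen.single ⟨q, hq, Or.inl ⟨hqd, by omega, rfl⟩⟩
    · have hd2' : 2 ≤ d := by omega
      have hj : 1 ≤ j := by
        by_contra hj
        interval_cases j <;> omega
      obtain ⟨j', rfl⟩ : ∃ j', j = j' + 1 := ⟨j - 1, by omega⟩
      set e := 2 ^ j' with hedef
      have he : 2 ^ (j' + 1) = e + e := by rw [pow_succ]; omega
      have he1 : 1 ≤ e := Nat.one_le_two_pow
      set d2 := d / 2 with hd2def
      set d1 := d - d2 with hd1def
      have hd1e : d1 ≤ e := by omega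
      have hd2e : d2 ≤ e := by omega
      have hd11 : 1 ≤ d1 := by omega
      have hd21 : 1 ≤ d2 := by omega
      have hdd : d1 + d2 = d := by omega
      by_cases hm : q + d1 ∈ c
      · have h := ih d2 (by omega) (j' + 1) (q + d1) c hd21 (by omega) hm
          (by rw [add_assoc, hdd]; exact hqd) hcard
        rwa [add_assoc, hdd] at h
      · have h1 : Reach n c (insert (q + d1) c) :=
          ih d1 (by omega) j' q c hd11 hd1e hq hm (by omega)
        have h2 : Reach n (insert (q + d1) c)
            (insert (q + d1 + d2) (insert (q + d1) c)) := by
          refine ih d2 (by omega) j' (q + d1) (insert (q + d1) c) hd21 hd2e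
            (Finset.mem_insert_self _ _) ?_ ?_
          · rw [add_assoc, hdd]
            simp only [Finset.mem_insert]
            push_neg
            exact ⟨by omega, hqd⟩
          · rw [Finset.card_insert_of_notMem hm]; omega
        have h3 : Reach n (insert (q + d) c) (insert (q + d1) (insert (q + d) c)) :=
          ih d1 (by omega) j' q (insert (q + d) c) hd11 hd1e
            (Finset.mem_insert_of_mem hq)
            (by simp only [Finset.mem_insert]; push_neg; exact ⟨by omega, hm⟩)
            (by rw [Finset.card_insert_of_notMem hqd]; omega)
        have h3s : Reach n (insert (q + d1) (insert (q + d) c)) (insert (q + d) c) := by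
          refine reach_symm h3 ?_
          rw [Finset.card_insert_of_notMem hqd]; omega
        have hcomm : insert (q + d1 + d2) (insert (q + d1) c)
            = insert (q + d1) (insert (q + d) c) := by
          rw [add_assoc, hdd, Finset.insert_comm]
        exact (h1.trans h2).trans (hcomm ▸ h3s)

/-- Recursive version of the good-numbering condition. -/
def goodR : ℕ → List ℕ → Prop
  | _, [] => True
  | f, x :: L => (∃ q, (q = 0 ∨ q ∈ L) ∧ q < x ∧ x - q ≤ 2 ^ f) ∧ goodR (f + 1) L

lemma goodR_iff (L : List ℕ) : ∀ f, goodR f L ↔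
    (∀ i : Fin L.length, ∃ q, (q = 0 ∨ q ∈ L.drop (i.1 + 1)) ∧
      q < L.get i ∧ L.get i - q ≤ 2 ^ (f + i.1)) := by
  induction L with
  | nil =>
      intro f
      simp only [goodR, List.length_nil, true_iff]
      intro i; exact absurd i.2 (by simp)
  | cons x L ih =>
      intro f
      constructor
      · rintro ⟨⟨q, hq, hlt, hle⟩, htail⟩ i
        refine Fin.cases ?_ ?_ i
        · refine ⟨q, ?_, ?_, ?_⟩
          · first | exact hq | simpa using hq
          · first | exact hlt | simpa using hlt
          · first | exact hle | simpa using hle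
        · intro j
          obtain ⟨q', hq', hlt', hle'⟩ := (ih (f + 1)).1 htail j
          refine ⟨q', ?_, ?_, ?_⟩
          · simpa using hq'
          · first | exact hlt' | simpa using hlt'
          · show (x :: L).get j.succ - q' ≤ 2 ^ (f + (j.succ : ℕ))
            simp only [List.get_cons_succ, Fin.val_succ]
            have heq : f + ((j : ℕ) + 1) = f + 1 + (j : ℕ) := by omega
            rw [heq]
            exact hle'
      · intro h
        constructor
        · obtain ⟨q, hq, hlt, hle⟩ := h ⟨0, by simp⟩
          refine ⟨q, ?_, ?_, ?_⟩
          · first | exact hq | simpa using hq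
          · first | exact hlt | simpa using hlt
          · first | exact hle | simpa using hle
        · rw [ih (f + 1)]
          intro j
          obtain ⟨q, hq, hlt, hle⟩ := h j.succ
          refine ⟨q, by simpa using hq, by simpa using hlt, ?_⟩
          have hle' : L.get j - q ≤ 2 ^ (f + ((j : ℕ) + 1)) := by simpa using hle
          have heq : f + ((j : ℕ) + 1) = f + 1 + (j : ℕ) := by omega
          rwa [heq] at hle'

/-- From a good numbering, the configuration is reachable. -/
lemma build (n : ℕ) : ∀ (L : List ℕ) (f : ℕ), goodR f L → L.Nodup →
    (∀ x ∈ L, x ≠ 0) → f + L.length ≤ n →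
    Reach n {0} (insert 0 L.toFinset) := by
  intro L
  induction L with
  | nil =>
      intro f _ _ _ _
      simp only [List.toFinset_nil]
      exact Relation.ReflTransGen.refl
  | cons x L ih =>
      intro f hgood hnd hne hlen
      obtain ⟨⟨q, hq, hlt, hle⟩, htail⟩ := hgood
      have hx0 : x ≠ 0 := hne x List.mem_cons_self
      have hxL : x ∉ L := (List.nodup_cons.1 hnd).1
      simp only [List.length_cons] at hlen
      have h1 : Reach n {0} (insert 0 L.toFinset) :=
        ih (f + 1) htail (List.nodup_cons.1 hnd).2
          (fun y hy => hne y (List.mem_cons_of_mem _ hy)) (by omega)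
      have hqmem : q ∈ insert 0 L.toFinset := by
        rcases hq with rfl | hq
        · exact Finset.mem_insert_self _ _
        · exact Finset.mem_insert_of_mem (List.mem_toFinset.2 hq)
      have hxnotmem : x ∉ insert 0 L.toFinset := by
        simp only [Finset.mem_insert, List.mem_toFinset]
        push_neg
        exact ⟨hx0, hxL⟩
      have hcard : (insert 0 L.toFinset).card + f + 1 ≤ n + 1 := by
        have hc1 : (insert 0 L.toFinset).card ≤ L.toFinset.card + 1 :=
          Finset.card_insert_le _ _
        have hc2 : L.toFinset.card ≤ L.length := L.toFinset_card_le
        omega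
      have h2 : Reach n (insert 0 L.toFinset)
          (insert (q + (x - q)) (insert 0 L.toFinset)) :=
        reach_insert n (x - q) f q _ (by omega) hle hqmem
          (by rwa [Nat.add_sub_cancel' hlt.le]) hcard
      rw [Nat.add_sub_cancel' hlt.le] at h2
      have heq : insert x (insert 0 L.toFinset) = insert 0 (x :: L).toFinset := by
        rw [List.toFinset_cons, Finset.insert_comm]
      exact h1.trans (heq ▸ h2)

/-- Key deletion lemma: erasing an element `y` that has a pebble (or node 0)
within distance `2^f` below it preserves goodness at `f+1`. -/
lemma goodR_erase : ∀ (L : List ℕ) (f y : ℕ), goodR f L → y ∈ L →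
    (∃ z, (z = 0 ∨ z ∈ L.erase y) ∧ z < y ∧ y - z ≤ 2 ^ f) →
    goodR (f + 1) (L.erase y) := by
  intro L
  induction L with
  | nil => intro f y _ hy; exact absurd hy List.not_mem_nil
  | cons x L ih =>
      intro f y hgood hy hz
      obtain ⟨⟨q, hq, hlt, hle⟩, htail⟩ := hgood
      have h2pow : 2 ^ (f + 1) = 2 ^ f + 2 ^ f := by rw [pow_succ]; omega
      by_cases hxy : x = y
      · subst hxy
        rw [List.erase_cons_head]
        exact htail
      · have hyL : y ∈ L := by
          rcases List.mem_cons.1 hy with h | h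
          · exact absurd h.symm hxy
          · exact h
        rw [List.erase_cons_tail (by simpa using hxy)] at hz ⊢
        obtain ⟨z, hzmem, hzy, hzle⟩ := hz
        constructor
        · -- head condition for x at level f+1
          by_cases hqy : q = y
          · subst hqy
            rcases hzmem with rfl | hzmem
            · exact ⟨0, Or.inl rfl, by omega, by omega⟩
            · rcases List.mem_cons.1 hzmem with rfl | hzm
              · exact absurd rfl (by omega : z ≠ z) -- impossible: z = x but z < y=q < x
              · exact ⟨z, Or.inr hzm, by omega, by omega⟩
          · refine ⟨q, ?_, hlt, by omega⟩
            rcases hq with rfl | hq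
            · exact Or.inl rfl
            · exact Or.inr ((List.mem_erase_of_ne hqy).2 hq)
        · -- tail condition via induction hypothesis
          have hw : ∃ z', (z' = 0 ∨ z' ∈ L.erase y) ∧ z' < y ∧ y - z' ≤ 2 ^ (f + 1) := by
            rcases hzmem with rfl | hzmem
            · exact ⟨0, Or.inl rfl, hzy, by omega⟩
            · rcases List.mem_cons.1 hzmem with rfl | hzm
              · -- z = x : use x's own support q
                have hqy : q ≠ y := by omega
                refine ⟨q, ?_, by omega, by omega⟩
                rcases hq with rfl | hq
                · exact Or.inl rfl
                · exact Or.inr ((List.mem_erase_of_ne hqy).2 hq)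
              · exact ⟨z, Or.inr hzm, hzy, by omega⟩
          exact ih (f + 1) y htail hyL hw

/-- The main invariant along reachable configurations. -/
lemma reach_main {n : ℕ} {c : Finset ℕ} (h : Reach n {0} c) :
    0 ∈ c ∧ c.card ≤ n + 1 ∧ ∃ L : List ℕ, L.Nodup ∧ L.toFinset = c.erase 0 ∧
      goodR (n - (c.erase 0).card) L := by
  induction h with
  | refl =>
      refine ⟨Finset.mem_singleton_self 0, by simp, [], List.nodup_nil, ?_, trivial⟩
      simp
  | @tail b c' hsteps hstep ih =>
      obtain ⟨h0, hcard, L, hnd, hfin, hgood⟩ := ih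
      obtain ⟨i, hi, hcase | hcase⟩ := hstep
      · -- insert case
        obtain ⟨hnotmem, hlt, rfl⟩ := hcase
        have hi1 : (i + 1 : ℕ) ≠ 0 := by omega
        set k := (b.erase 0).card with hk
        have hkc : b.card = k + 1 := by
          rw [hk, Finset.card_erase_of_mem h0]
          have : 1 ≤ b.card := Finset.card_pos.2 ⟨0, h0⟩
          omega
        have hkn : k + 1 ≤ n := by omega
        have hE : (insert (i + 1) b).erase 0 = insert (i + 1) (b.erase 0) :=
          Finset.erase_insert_of_ne hi1
        have hnotE : (i + 1) ∉ b.erase 0 := fun hmem => hnotmem (Finset.mem_of_mem_erase hmem)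
        have hcardE : ((insert (i + 1) b).erase 0).card = k + 1 := by
          rw [hE, Finset.card_insert_of_notMem hnotE]
        have hnotL : (i + 1) ∉ L := fun hmem => hnotE (hfin ▸ List.mem_toFinset.2 hmem)
        refine ⟨Finset.mem_insert_of_mem h0, ?_, (i + 1) :: L, ?_, ?_, ?_⟩
        · rw [Finset.card_insert_of_notMem hnotmem]; omega
        · exact List.nodup_cons.2 ⟨hnotL, hnd⟩
        · rw [List.toFinset_cons, hfin, hE]
        · rw [hcardE]
          have hpow : 1 ≤ 2 ^ (n - (k + 1)) := Nat.one_le_two_pow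
          refine ⟨⟨i, ?_, by omega, by omega⟩, ?_⟩
          · rcases Nat.eq_zero_or_pos i with rfl | hipos
            · exact Or.inl rfl
            · refine Or.inr (List.mem_toFinset.1 ?_)
              rw [hfin]
              exact Finset.mem_erase.2 ⟨by omega, hi⟩
          · have : n - (k + 1) + 1 = n - k := by omega
            rw [this]
            exact hgood
      · -- erase case
        obtain ⟨hmem, rfl⟩ := hcase
        have hi1 : (i + 1 : ℕ) ≠ 0 := by omega
        set k := (b.erase 0).card with hk
        have hkc : b.card = k + 1 := by
          rw [hk, Finset.card_erase_of_mem h0]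
          have : 1 ≤ b.card := Finset.card_pos.2 ⟨0, h0⟩
          omega
        have hkn : k ≤ n := by omega
        have hmemE : (i + 1) ∈ b.erase 0 := Finset.mem_erase.2 ⟨hi1, hmem⟩
        have hmemL : (i + 1) ∈ L := List.mem_toFinset.1 (hfin ▸ hmemE)
        have hk1 : 1 ≤ k := Finset.card_pos.2 ⟨i + 1, hmemE⟩
        have hE : (b.erase (i + 1)).erase 0 = (b.erase 0).erase (i + 1) :=
          Finset.erase_right_comm
        have hcardE : ((b.erase (i + 1)).erase 0).card = k - 1 := by
          rw [hE, Finset.card_erase_of_mem hmemE]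
        refine ⟨Finset.mem_erase.2 ⟨(by omega : (0:ℕ) ≠ i + 1), h0⟩,
          le_trans Finset.card_erase_le hcard, L.erase (i + 1), hnd.erase _, ?_, ?_⟩
        · ext a
          rw [List.mem_toFinset, hnd.mem_erase_iff, hE, Finset.mem_erase, ← hfin,
            List.mem_toFinset]
        · rw [hcardE]
          have heq : n - (k - 1) = (n - k) + 1 := by omega
          rw [heq]
          refine goodR_erase L (n - k) (i + 1) hgood hmemL ⟨i, ?_, by omega, ?_⟩
          · rcases Nat.eq_zero_or_pos i with rfl | hipos
            · exact Or.inl rfl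
            · refine Or.inr (hnd.mem_erase_iff.2 ⟨by omega, ?_⟩)
              refine List.mem_toFinset.1 ?_
              rw [hfin]
              exact Finset.mem_erase.2 ⟨by omega, hi⟩
          · have hpow : 1 ≤ 2 ^ (n - k) := Nat.one_le_two_pow
            omega

end PebbleAux

/-- A pebble configuration (with the fixed pebble at node 0 and `n` movable
pebbles, of which `f = n - #placed` are free) is realizable if and only if
its placed pebbles admit a good numbering. -/
theorem realizable_iff_goodNumbering (n : ℕ) (c : Finset ℕ) (h0 : 0 ∈ c)
    (hcard : c.card ≤ n + 1) :
    PebbleReachable n c ↔ GoodNumbering (n - (c.erase 0).card) (c.erase 0) := by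
  constructor
  · intro h
    obtain ⟨-, -, L, hnd, hfin, hgood⟩ := PebbleAux.reach_main h
    exact ⟨L, hnd, hfin, (PebbleAux.goodR_iff L _).1 hgood⟩
  · rintro ⟨L, hnd, hfin, hcond⟩
    have hgood : PebbleAux.goodR (n - (c.erase 0).card) L :=
      (PebbleAux.goodR_iff L _).2 hcond
    have hne : ∀ x ∈ L, x ≠ 0 := by
      intro x hx
      have : x ∈ c.erase 0 := hfin ▸ List.mem_toFinset.2 hx
      exact (Finset.mem_erase.1 this).1
    have hlenE : L.length = (c.erase 0).card := by
      rw [← hfin, List.toFinset_card_of_nodup hnd]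
    have hkn : (c.erase 0).card ≤ n := by
      have h1 : (c.erase 0).card = c.card - 1 := Finset.card_erase_of_mem h0
      have : 1 ≤ c.card := Finset.card_pos.2 ⟨0, h0⟩
      omega
    have hb := PebbleAux.build n L (n - (c.erase 0).card) hgood hnd hne (by omega)
    have heq : insert 0 L.toFinset = c := by
      rw [hfin, Finset.insert_erase h0]
    rw [heq] at hb
    exact hb
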